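/- Let r be a natural number and let a : ℕ × ℕ → ℝ be such that for every N, the matrix (a(i,j))_{i,j<N} is symmetric, positive semidefinite, and has rank at most r. Then there exists a sequence of vectors ξ : ℕ → ℝ^r such that a(i,j) = ⟨ξ_i, ξ_j⟩ (Euclidean inner product) for all i, j ∈ ℕ. -/

import Mathlib

open scoped RealInnerProductSpace

-- Lemma A: embedding of Euclidean spaces
noncomputable def embedEuc (n r : ℕ) (h : n ≤ r) :
    EuclideanSpace ℝ (Fin n) →ₗᵢ[ℝ] EuclideanSpace ℝ (Fin r) := by
  classical
  let g : (Fin n → ℝ) →ₗ[ℝ] (Fin r → ℝ) :=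
    LinearMap.pi (fun j : Fin r =>
      if hj : (j : ℕ) < n then LinearMap.proj (⟨j, hj⟩ : Fin n) else 0)
  let f : EuclideanSpace ℝ (Fin n) →ₗ[ℝ] EuclideanSpace ℝ (Fin r) :=
    (WithLp.linearEquiv 2 ℝ (Fin r → ℝ)).symm.toLinearMap ∘ₗ g ∘ₗ
      (WithLp.linearEquiv 2 ℝ (Fin n → ℝ)).toLinearMap
  refine f.isometryOfInner ?_
  intro x y
  have hg : ∀ (x' : Fin n → ℝ) (j : Fin r),
      g x' j = if hj : (j : ℕ) < n then x' ⟨j, hj⟩ else 0 := by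
    intro x' j
    rw [LinearMap.pi_apply, apply_dite (fun L : (Fin n → ℝ) →ₗ[ℝ] ℝ => L x')]
    simp
  have hfx : ∀ (x : EuclideanSpace ℝ (Fin n)) (j : Fin r),
      f x j = if hj : (j : ℕ) < n then x ⟨j, hj⟩ else 0 := by
    intro x j
    rw [show f x j = g ((WithLp.linearEquiv 2 ℝ (Fin n → ℝ)) x) j from rfl, hg]
    rfl
  have key : (∑ j : Fin r, (f x j) * (f y j)) = ∑ j : Fin n, x j * y j := by
    set X : ℕ → ℝ := fun k => if hk : k < n then x ⟨k, hk⟩ * y ⟨k, hk⟩ else 0 with hX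
    have h1 : ∀ j : Fin r, (f x j) * (f y j) = X j := by
      intro j
      rw [hfx, hfx]
      by_cases hj : (j : ℕ) < n <;> simp [X, hj]
    rw [Finset.sum_congr rfl (fun j _ => h1 j), Fin.sum_univ_eq_sum_range X r]
    have h2 : ∑ k ∈ Finset.range r, X k = ∑ k ∈ Finset.range n, X k := by
      refine (Finset.sum_subset (Finset.range_subset_range.mpr h) ?_).symm
      intro k hk hk'
      simp only [Finset.mem_range] at hk'
      simp [X, hk']
    rw [h2, ← Fin.sum_univ_eq_sum_range X n]
    refine Finset.sum_congr rfl fun j _ => ?_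
    simp [X]
  simp only [PiLp.inner_apply, RCLike.inner_apply, starRingEnd_apply, star_trivial]
  simpa [mul_comm] using key

-- Lemma B: any finite-dim real inner product space of finrank ≤ r embeds into ℝ^r
noncomputable def isomOfFinrankLe (E : Type*) [NormedAddCommGroup E] [InnerProductSpace ℝ E]
    [FiniteDimensional ℝ E] (r : ℕ) (h : Module.finrank ℝ E ≤ r) :
    E →ₗᵢ[ℝ] EuclideanSpace ℝ (Fin r) :=
  (embedEuc _ r h).comp (stdOrthonormalBasis ℝ E).repr.toLinearIsometry

-- Lemma C: a PSD matrix of rank ≤ r is a Gram matrix of vectors in ℝ^r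
theorem finGram {N r : ℕ} (M : Matrix (Fin N) (Fin N) ℝ) (hpsd : M.PosSemidef)
    (hrank : M.rank ≤ r) :
    ∃ v : Fin N → EuclideanSpace ℝ (Fin r), ∀ i j, M i j = ⟪v i, v j⟫ := by
  classical
  obtain ⟨B, hB⟩ : ∃ B : Matrix (Fin N) (Fin N) ℝ, M = B.conjTranspose * B := by
    open scoped MatrixOrder in
    exact CStarAlgebra.nonneg_iff_eq_star_mul_self.mp hpsd.nonneg
  set e := (WithLp.linearEquiv 2 ℝ (Fin N → ℝ)).symm
  set c : Fin N → EuclideanSpace ℝ (Fin N) := fun i => e (B.transpose i) with hc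
  set W : Submodule ℝ (EuclideanSpace ℝ (Fin N)) := Submodule.span ℝ (Set.range c) with hW
  have hWmap : W = (Submodule.span ℝ (Set.range B.transpose)).map e.toLinearMap := by
    rw [Submodule.map_span, hW]
    congr 1
    ext x
    simp [c]
    exact ⟨fun ⟨y, hy⟩ => ⟨_, ⟨y, rfl⟩, hy⟩, fun ⟨_, ⟨y, rfl⟩, hy⟩ => ⟨y, hy⟩⟩
  have hfr : Module.finrank ℝ W ≤ r := by
    rw [hWmap, LinearEquiv.finrank_map_eq e]
    rw [show Set.range B.transpose = Set.range B.col from rfl, ← Matrix.rank_eq_finrank_span_cols]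
    calc B.rank = (B.conjTranspose * B).rank := (Matrix.rank_conjTranspose_mul_self B).symm
    _ = M.rank := by rw [← hB]
    _ ≤ r := hrank
  haveI : FiniteDimensional ℝ W := FiniteDimensional.span_of_finite ℝ (Set.finite_range c)
  let L := isomOfFinrankLe W r hfr
  refine ⟨fun i => L ⟨c i, Submodule.subset_span (Set.mem_range_self i)⟩, fun i j => ?_⟩
  rw [L.inner_map_map]
  have : (⟪(⟨c i, Submodule.subset_span (Set.mem_range_self i)⟩ : W),
      ⟨c j, Submodule.subset_span (Set.mem_range_self j)⟩⟫ : ℝ) = ⟪c i, c j⟫ := rfl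
  rw [this, hB]
  simp only [PiLp.inner_apply, RCLike.inner_apply, starRingEnd_apply, star_trivial,
    Matrix.mul_apply, Matrix.conjTranspose_apply, Matrix.of_apply]
  exact Finset.sum_congr rfl fun k _ => mul_comm _ _

/-- Every infinite real symmetric array whose finite corner matrices are positive semidefinite
of rank at most `r` admits a Gram representation by a sequence of vectors in `ℝ^r`. -/
theorem stmt4 (r : ℕ) (a : ℕ → ℕ → ℝ)
    (hpsd : ∀ N : ℕ, (Matrix.of fun i j : Fin N => a i j).PosSemidef)
    (hrank : ∀ N : ℕ, (Matrix.of fun i j : Fin N => a i j).rank ≤ r) :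
    ∃ ξ : ℕ → EuclideanSpace ℝ (Fin r), ∀ i j, a i j = ⟪ξ i, ξ j⟫ := by
  classical
  have hch : ∀ N : ℕ, ∃ v : Fin N → EuclideanSpace ℝ (Fin r),
      ∀ i j : Fin N, a i j = ⟪v i, v j⟫ := by
    intro N
    obtain ⟨v, hv⟩ := finGram _ (hpsd N) (hrank N)
    exact ⟨v, fun i j => hv i j⟩
  choose w hw using hch
  let vseq : ℕ → ℕ → EuclideanSpace ℝ (Fin r) := fun N i => if h : i < N then w N ⟨i, h⟩ else 0
  have hnorm : ∀ N i, ‖vseq N i‖ ≤ Real.sqrt (a i i) := by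
    intro N i
    by_cases h : i < N
    · have h1 : a i i = ⟪w N ⟨i, h⟩, w N ⟨i, h⟩⟫ := hw N ⟨i, h⟩ ⟨i, h⟩
      have h2 : a i i = ‖w N ⟨i, h⟩‖ ^ 2 := by
        rw [h1, real_inner_self_eq_norm_sq]
      simp only [vseq, dif_pos h]
      rw [h2, Real.sqrt_sq (norm_nonneg _)]
    · simp only [vseq, dif_neg h]
      simp [Real.sqrt_nonneg]
  set K := Set.pi Set.univ (fun i => Metric.closedBall (0 : EuclideanSpace ℝ (Fin r)) (Real.sqrt (a i i))) with hKdef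
  have hK : IsCompact K := isCompact_univ_pi fun i => isCompact_closedBall _ _
  have hmem : ∀ N, vseq N ∈ K := by
    intro N i _
    rw [Metric.mem_closedBall, dist_zero_right]
    exact hnorm N i
  have hle : Filter.map vseq Filter.atTop ≤ Filter.principal K := by
    rw [Filter.le_principal_iff, Filter.mem_map]
    exact Filter.Eventually.of_forall hmem
  obtain ⟨x, _, hx⟩ := hK.exists_clusterPt hle
  refine ⟨x, fun i j => ?_⟩
  set s := {y : ℕ → EuclideanSpace ℝ (Fin r) | a i j = ⟪y i, y j⟫} with hsdef
  have hclosed : IsClosed s :=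
    isClosed_eq continuous_const (Continuous.inner (continuous_apply i) (continuous_apply j))
  have hev : ∀ᶠ N in Filter.atTop, vseq N ∈ s := by
    rw [Filter.eventually_atTop]
    refine ⟨max i j + 1, fun N hN => ?_⟩
    have hi : i < N := lt_of_le_of_lt (le_max_left i j) hN
    have hj : j < N := lt_of_le_of_lt (le_max_right i j) hN
    show a i j = ⟪vseq N i, vseq N j⟫
    simp only [vseq, dif_pos hi, dif_pos hj]
    exact hw N ⟨i, hi⟩ ⟨j, hj⟩
  have hcl : ClusterPt x (Filter.principal s) :=
    hx.mono (Filter.le_principal_iff.mpr (Filter.mem_map.mpr hev))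
  have : x ∈ closure s := mem_closure_iff_clusterPt.mpr hcl
  rwa [hclosed.closure_eq] at this
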